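/- arXiv:2004.03725 — 4 statements merged into one kernel-verified Lean document; each statement's English description precedes it below -/
import Mathlib

section
/- Let G be a directed graph on n+m nodes where nodes 1,...,n are followers and nodes n+1,...,n+m are leaders (leaders have no incoming edges). Partition the graph Laplacian as L = [[L1, L2],[0,0]] with L1 ∈ ℝ^{n×n}, L2 ∈ ℝ^{n×m}. If for each follower there exists at least one leader with a directed path to it, then L1 is invertible, all eigenvalues of L1 have positive real parts, every entry of -L1^{-1}L2 is nonnegative, and each row of -L1^{-1}L2 sums to 1. -/
open Matrix Finset

lemma core_nonneg (n m : ℕ) (a : Matrix (Fin (n+m)) (Fin (n+m)) ℝ)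
    (hnn : ∀ i j, 0 ≤ a i j)
    (hreach : ∀ i : Fin n, ∃ k : Fin m,
      Relation.TransGen (fun u v : Fin (n+m) => 0 < a v u)
        (Fin.natAdd n k) (Fin.castAdd m i))
    (x c : Fin n → ℝ) (hc : ∀ i, 0 ≤ c i)
    (hx : ∀ i, (∑ t, a (Fin.castAdd m i) t) * x i
        - ∑ j, a (Fin.castAdd m i) (Fin.castAdd m j) * x j = c i) :
    ∀ i, 0 ≤ x i := by
  by_contra hcon
  push_neg at hcon
  obtain ⟨i0, hi0⟩ := hcon
  obtain ⟨iS, -, hiS⟩ := Finset.exists_min_image Finset.univ x ⟨i0, Finset.mem_univ i0⟩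
  simp only [Finset.mem_univ, forall_true_left] at hiS
  set m0 := x iS with hm0
  have hm0neg : m0 < 0 := lt_of_le_of_lt (hiS i0) hi0
  have hmin : ∀ j, m0 ≤ x j := hiS
  -- key local property
  have H : ∀ i : Fin n, x i = m0 → ∀ j : Fin (n+m), 0 < a (Fin.castAdd m i) j →
      ∃ j' : Fin n, j = Fin.castAdd m j' ∧ x j' = m0 := by
    intro i hxi j haj
    set d := ∑ t, a (Fin.castAdd m i) t with hd
    set s := ∑ j', a (Fin.castAdd m i) (Fin.castAdd m j') with hs
    have hsd : s ≤ d := by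
      rw [hd, Fin.sum_univ_add]
      have : 0 ≤ ∑ k : Fin m, a (Fin.castAdd m i) (Fin.natAdd n k) :=
        Finset.sum_nonneg fun _ _ => hnn _ _
      linarith [hs]
    have hsum_ge : s * m0 ≤ ∑ j', a (Fin.castAdd m i) (Fin.castAdd m j') * x j' := by
      rw [hs, Finset.sum_mul]
      exact Finset.sum_le_sum fun j' _ => mul_le_mul_of_nonneg_left (hmin j') (hnn _ _)
    have hci := hx i
    rw [hxi] at hci
    have hcnn := hc i
    have h1 : c i ≤ (d - s) * m0 := by nlinarith
    have h2 : (d - s) * m0 ≤ 0 := mul_nonpos_of_nonneg_of_nonpos (by linarith) hm0neg.le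
    have hds : d = s := by nlinarith
    have hsumeq : ∑ j', a (Fin.castAdd m i) (Fin.castAdd m j') * x j' = s * m0 := by nlinarith
    have hterm : ∀ j' : Fin n, a (Fin.castAdd m i) (Fin.castAdd m j') * (x j' - m0) = 0 := by
      have hsum0 : ∑ j', a (Fin.castAdd m i) (Fin.castAdd m j') * (x j' - m0) = 0 := by
        simp only [mul_sub]
        rw [Finset.sum_sub_distrib, hsumeq, ← Finset.sum_mul, ← hs]
        ring
      intro j'
      exact (Finset.sum_eq_zero_iff_of_nonneg (fun j' _ =>
        mul_nonneg (hnn _ _) (sub_nonneg.mpr (hmin j')))).mp hsum0 j' (Finset.mem_univ _)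
    have hlead0 : ∀ k : Fin m, a (Fin.castAdd m i) (Fin.natAdd n k) = 0 := by
      have hsplit : d = s + ∑ k : Fin m, a (Fin.castAdd m i) (Fin.natAdd n k) := by
        rw [hd, Fin.sum_univ_add]
      have hz : ∑ k : Fin m, a (Fin.castAdd m i) (Fin.natAdd n k) = 0 := by linarith
      intro k
      exact (Finset.sum_eq_zero_iff_of_nonneg (fun k _ => hnn _ _)).mp hz k (Finset.mem_univ _)
    by_cases hj : (j : ℕ) < n
    · refine ⟨⟨(j : ℕ), hj⟩, Fin.ext rfl, ?_⟩
      have := hterm ⟨(j : ℕ), hj⟩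
      have hjc : Fin.castAdd m (⟨(j : ℕ), hj⟩ : Fin n) = j := Fin.ext rfl
      rw [hjc] at this
      rcases mul_eq_zero.mp this with h | h
      · exact absurd h (ne_of_gt haj)
      · linarith [sub_eq_zero.mp h]
    · exfalso
      have hk : (j : ℕ) - n < m := by omega
      have hjn : j = Fin.natAdd n ⟨(j : ℕ) - n, hk⟩ := by
        apply Fin.ext; simp [Fin.natAdd]; omega
      rw [hjn] at haj
      rw [hlead0 ⟨(j : ℕ) - n, hk⟩] at haj
      exact lt_irrefl 0 haj
  -- propagation along paths
  have prop : ∀ u v : Fin (n+m),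
      Relation.TransGen (fun u v : Fin (n+m) => 0 < a v u) u v →
      ∀ i : Fin n, v = Fin.castAdd m i → x i = m0 →
      ∃ i' : Fin n, u = Fin.castAdd m i' ∧ x i' = m0 := by
    intro u v h
    induction h with
    | single hr =>
      intro i hv hxi
      subst hv
      exact H i hxi u hr
    | tail h1 hr ih =>
      intro i hv hxi
      subst hv
      obtain ⟨j', hb, hxj⟩ := H i hxi _ hr
      exact ih j' hb hxj
  obtain ⟨k, hk⟩ := hreach iS
  obtain ⟨i', hi', -⟩ := prop _ _ hk iS rfl rfl
  have : (Fin.natAdd n k : Fin (n+m)).val = (Fin.castAdd m i' : Fin (n+m)).val := by rw [hi']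
  simp [Fin.natAdd, Fin.castAdd, Fin.castLE] at this
  omega

open Matrix Finset

theorem stmt0 (n m : ℕ) (a : Matrix (Fin (n+m)) (Fin (n+m)) ℝ)
    (hnn : ∀ i j, 0 ≤ a i j) (hhollow : ∀ i, a i i = 0)
    (hleader : ∀ (k : Fin m) (j : Fin (n+m)), a (Fin.natAdd n k) j = 0)
    (L : Matrix (Fin (n+m)) (Fin (n+m)) ℝ)
    (hL : ∀ i j, L i j = (if i = j then ∑ k, a i k else 0) - a i j)
    (L1 : Matrix (Fin n) (Fin n) ℝ)
    (hL1 : ∀ i j, L1 i j = L (Fin.castAdd m i) (Fin.castAdd m j))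
    (L2 : Matrix (Fin n) (Fin m) ℝ)
    (hL2 : ∀ i k, L2 i k = L (Fin.castAdd m i) (Fin.natAdd n k))
    (hreach : ∀ i : Fin n, ∃ k : Fin m,
      Relation.TransGen (fun u v : Fin (n+m) => 0 < a v u)
        (Fin.natAdd n k) (Fin.castAdd m i)) :
    IsUnit L1 ∧
    (∀ μ ∈ spectrum ℂ (L1.map Complex.ofReal), 0 < μ.re) ∧
    (∀ i k, 0 ≤ (-(L1⁻¹ * L2)) i k) ∧
    (∀ i, ∑ k, (-(L1⁻¹ * L2)) i k = 1) := by
  -- notation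
  set d : Fin n → ℝ := fun i => ∑ t, a (Fin.castAdd m i) t with hdd
  have hL1' : ∀ i j, L1 i j = (if i = j then d i else 0) - a (Fin.castAdd m i) (Fin.castAdd m j) := by
    intro i j
    rw [hL1, hL]
    simp [Fin.castAdd_inj]
    split_ifs <;> rfl
  have hL2' : ∀ i k, L2 i k = - a (Fin.castAdd m i) (Fin.natAdd n k) := by
    intro i k
    rw [hL2, hL]
    have : Fin.castAdd m i ≠ Fin.natAdd n k := by
      intro h
      have := congrArg Fin.val h
      simp [Fin.castAdd, Fin.natAdd, Fin.castLE] at this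
      omega
    simp [this]
  have hmv : ∀ (x : Fin n → ℝ) (i : Fin n),
      (L1 *ᵥ x) i = d i * x i - ∑ j, a (Fin.castAdd m i) (Fin.castAdd m j) * x j := by
    intro x i
    simp only [mulVec, dotProduct, hL1', sub_mul, ite_mul, zero_mul,
      Finset.sum_sub_distrib, Finset.sum_ite_eq, Finset.mem_univ, if_true]
  -- invertibility
  have hU : IsUnit L1 := by
    rw [← Matrix.mulVec_injective_iff_isUnit]
    have hker : ∀ u : Fin n → ℝ, L1 *ᵥ u = 0 → u = 0 := by
      intro v hv
      have h1 : ∀ i, 0 ≤ v i := by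
        apply core_nonneg n m a hnn hreach v 0 (fun i => le_refl 0)
        intro i
        rw [← hmv v i, hv]
      have h2 : ∀ i, 0 ≤ -v i := by
        apply core_nonneg n m a hnn hreach (-v) 0 (fun i => le_refl 0)
        intro i
        have hz : L1 *ᵥ (-v) = 0 := by rw [mulVec_neg, hv, neg_zero]
        have hz2 := congrFun hz i
        rw [hmv (-v) i] at hz2
        simpa using hz2
      funext i
      simp only [Pi.zero_apply]
      linarith [h1 i, h2 i]
    intro v w hvw
    have := hker (v - w) (by rw [mulVec_sub, hvw, sub_self])
    exact sub_eq_zero.mp this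
  have hUdet : IsUnit L1.det := (Matrix.isUnit_iff_isUnit_det L1).mp hU
  refine ⟨hU, ?_, ?_, ?_⟩
  · -- spectrum
    intro μ hμ
    set M := L1.map Complex.ofReal with hM
    have hUM : IsUnit M := by
      have : M = Complex.ofRealHom.mapMatrix L1 := rfl
      rw [this]
      exact hU.map Complex.ofRealHom.mapMatrix
    have hμ0 : μ ≠ 0 := by
      intro h
      rw [h] at hμ
      exact (spectrum.zero_mem_iff ℂ).mp hμ hUM
    have hnu : ¬IsUnit ((algebraMap ℂ (Matrix (Fin n) (Fin n) ℂ)) μ - M) :=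
      spectrum.mem_iff.mp hμ
    have hdet0 : ((algebraMap ℂ (Matrix (Fin n) (Fin n) ℂ)) μ - M).det = 0 := by
      by_contra h
      exact hnu ((Matrix.isUnit_iff_isUnit_det _).mpr (isUnit_iff_ne_zero.mpr h))
    obtain ⟨v, hv0, hvz⟩ := (Matrix.exists_mulVec_eq_zero_iff).mpr hdet0
    have heig : M *ᵥ v = μ • v := by
      have h1 : (algebraMap ℂ (Matrix (Fin n) (Fin n) ℂ)) μ = μ • (1 : Matrix (Fin n) (Fin n) ℂ) := by
        rw [Algebra.algebraMap_eq_smul_one]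
      rw [h1, sub_mulVec, smul_mulVec, one_mulVec, sub_eq_zero] at hvz
      exact hvz.symm
    -- pick max coordinate
    obtain ⟨j0, hj0⟩ := Function.ne_iff.mp hv0
    obtain ⟨i, -, hi⟩ := Finset.exists_max_image Finset.univ (fun j => norm (v j))
      ⟨j0, Finset.mem_univ j0⟩
    simp only [Finset.mem_univ, forall_true_left] at hi
    have hvi : 0 < norm (v i) := by
      by_contra h
      push_neg at h
      apply hv0
      funext j
      have h1 := hi j
      have h2 : norm (v j) ≤ 0 := le_trans h1 h
      have := norm_nonneg (v j)
      have : norm (v j) = 0 := le_antisymm h2 this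
      simpa using this
    -- eigen equation at i
    have heq : (μ - (d i : ℂ)) * v i = -∑ j, (a (Fin.castAdd m i) (Fin.castAdd m j) : ℂ) * v j := by
      have h1 := congrFun heig i
      have h2 : (M *ᵥ v) i = (d i : ℂ) * v i - ∑ j, (a (Fin.castAdd m i) (Fin.castAdd m j) : ℂ) * v j := by
        simp only [mulVec, dotProduct, hM, Matrix.map_apply, hL1', Complex.ofReal_sub,
          sub_mul, Finset.sum_sub_distrib, apply_ite Complex.ofReal, Complex.ofReal_zero,
          ite_mul, zero_mul, Finset.sum_ite_eq, Finset.mem_univ, if_true]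
      have h3 : (μ • v) i = μ * v i := rfl
      rw [h2, h3] at h1
      linear_combination -h1
    -- Gershgorin bound
    have hbound : norm (μ - (d i : ℂ)) * norm (v i) ≤ d i * norm (v i) := by
      calc norm (μ - (d i : ℂ)) * norm (v i)
          = norm ((μ - (d i : ℂ)) * v i) := (norm_mul _ _).symm
        _ = norm (∑ j, (a (Fin.castAdd m i) (Fin.castAdd m j) : ℂ) * v j) := by
            rw [heq, norm_neg]
        _ ≤ ∑ j, norm ((a (Fin.castAdd m i) (Fin.castAdd m j) : ℂ) * v j) := by
            exact norm_sum_le _ _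
        _ = ∑ j, a (Fin.castAdd m i) (Fin.castAdd m j) * norm (v j) := by
            refine Finset.sum_congr rfl fun j _ => ?_
            rw [norm_mul, Complex.norm_real, Real.norm_eq_abs, abs_of_nonneg (hnn _ _)]
        _ ≤ ∑ j, a (Fin.castAdd m i) (Fin.castAdd m j) * norm (v i) := by
            exact Finset.sum_le_sum fun j _ => mul_le_mul_of_nonneg_left (hi j) (hnn _ _)
        _ = (∑ j, a (Fin.castAdd m i) (Fin.castAdd m j)) * norm (v i) := by
            rw [Finset.sum_mul]
        _ ≤ d i * norm (v i) := by
            apply mul_le_mul_of_nonneg_right _ (norm_nonneg _)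
            rw [hdd]
            simp only
            rw [Fin.sum_univ_add]
            have : 0 ≤ ∑ k : Fin m, a (Fin.castAdd m i) (Fin.natAdd n k) :=
              Finset.sum_nonneg fun _ _ => hnn _ _
            linarith
    have habs : norm (μ - (d i : ℂ)) ≤ d i :=
      le_of_mul_le_mul_right (by linarith) hvi
    -- conclude Re μ > 0
    by_contra hre
    push_neg at hre
    have hdnn : 0 ≤ d i := Finset.sum_nonneg fun _ _ => hnn _ _
    have hsq : (μ.re - d i)^2 + μ.im^2 ≤ (d i)^2 := by
      have h1 : norm (μ - (d i : ℂ))^2 ≤ (d i)^2 := by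
        nlinarith [norm_nonneg (μ - (d i : ℂ))]
      rw [Complex.sq_norm, Complex.normSq_apply] at h1
      simp only [Complex.sub_re, Complex.ofReal_re, Complex.sub_im, Complex.ofReal_im, sub_zero] at h1
      nlinarith [h1]
    have hre0 : μ.re = 0 := by nlinarith
    have him0 : μ.im = 0 := by nlinarith
    exact hμ0 (Complex.ext hre0 him0)
  · -- nonnegativity
    intro i k
    set cv : Fin n → ℝ := fun j => a (Fin.castAdd m j) (Fin.natAdd n k) with hcv
    set y : Fin n → ℝ := L1⁻¹ *ᵥ cv with hy
    have hLy : L1 *ᵥ y = cv := by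
      rw [hy, mulVec_mulVec, Matrix.mul_nonsing_inv _ hUdet, one_mulVec]
    have hynn : ∀ j, 0 ≤ y j := by
      apply core_nonneg n m a hnn hreach y cv (fun j => hnn _ _)
      intro j
      rw [← hmv y j, hLy]
    have : (-(L1⁻¹ * L2)) i k = y i := by
      simp only [Matrix.neg_apply, Matrix.mul_apply, hy, mulVec, dotProduct, hcv]
      rw [← Finset.sum_neg_distrib]
      refine Finset.sum_congr rfl fun j _ => ?_
      rw [hL2' j k]
      ring
    rw [this]
    exact hynn i
  · -- row sums
    intro i
    have hL2sum : ∀ j, ∑ k, L2 j k = -(L1 *ᵥ (fun _ => (1:ℝ))) j := by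
      intro j
      rw [hmv]
      simp only [mul_one]
      have hsplit : d j = (∑ j', a (Fin.castAdd m j) (Fin.castAdd m j'))
          + ∑ k : Fin m, a (Fin.castAdd m j) (Fin.natAdd n k) := by
        rw [hdd]; exact Fin.sum_univ_add _
      have : ∑ k, L2 j k = -∑ k : Fin m, a (Fin.castAdd m j) (Fin.natAdd n k) := by
        rw [← Finset.sum_neg_distrib]
        exact Finset.sum_congr rfl fun k _ => hL2' j k
      rw [this]
      linarith [hsplit]
    calc ∑ k, (-(L1⁻¹ * L2)) i k
        = ∑ k, ∑ j, L1⁻¹ i j * (-(L2 j k)) := by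
          refine Finset.sum_congr rfl fun k _ => ?_
          simp only [Matrix.neg_apply, Matrix.mul_apply]
          rw [← Finset.sum_neg_distrib]
          exact Finset.sum_congr rfl fun j _ => by ring
      _ = ∑ j, L1⁻¹ i j * (-∑ k, L2 j k) := by
          rw [Finset.sum_comm]
          refine Finset.sum_congr rfl fun j _ => ?_
          rw [← Finset.mul_sum, ← Finset.sum_neg_distrib]
      _ = ∑ j, L1⁻¹ i j * ((L1 *ᵥ (fun _ => (1:ℝ))) j) := by
          refine Finset.sum_congr rfl fun j _ => ?_
          rw [hL2sum j, neg_neg]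
      _ = ((L1⁻¹ * L1) *ᵥ (fun _ => (1:ℝ))) i := by
          rw [← mulVec_mulVec]
          rfl
      _ = 1 := by
          rw [Matrix.nonsing_inv_mul _ hUdet, one_mulVec]
end

section
/- Consider the iterative distributed algorithm where each follower i initializes S_i^{(0)} = N_i^L (its leader neighbors) and updates S_i^{(k)} = (⋃_{j ∈ N_i \ N_i^L} S_j^{(k-1)}) ∪ S_i^{(0)}. If the graph G is a finite directed acyclic graph in which every follower is reachable from at least one leader, then for every follower i, S_i^{(k)} converges in finitely many iterations to the set of all influential leaders of i (all leaders having a directed path to i), and the number of iterations required is at most the length of the longest directed path in Ḡ_i. -/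
/-- The distributed set-iteration `S_i^{(k)}` converges, in a number of
iterations bounded by the length of the longest directed path in the influence subgraph
`Ḡ_i`, to the set of all influential leaders of follower `i`. -/
theorem stmt3 {V : Type*} [Fintype V] (E : V → V → Prop) (leader : V → Prop)
    (hacyclic : ∀ v, ¬ Relation.TransGen E v v)
    (hnoIn : ∀ v w, leader v → ¬ E w v)
    (hreach : ∀ v, ¬ leader v → ∃ w, leader w ∧ Relation.TransGen E w v)
    (S : ℕ → V → Set V)
    (hS0 : ∀ v, S 0 v = {w | leader w ∧ E w v})
    (hSstep : ∀ k v, S (k+1) v = (⋃ j ∈ {j | ¬ leader j ∧ E j v}, S k j) ∪ S 0 v)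
    (i : V) (hi : ¬ leader i)
    (K : ℕ)
    (hK : ∀ l : List V, l.Chain' E → l.Nodup →
      (∀ v ∈ l, v = i ∨ Relation.TransGen E v i) → l.length ≤ K + 1) :
    ∀ k, K ≤ k → S k i = {w | leader w ∧ Relation.TransGen E w i} := by
  -- from a chain `a → l`, `a` reaches every element of `l`
  have chain_trans : ∀ (l : List V) (a b : V), List.Chain E a l → b ∈ l →
      Relation.TransGen E a b := by
    intro l
    induction l with
    | nil => intro a b _ hb; simp at hb
    | cons c t ih =>
      intro a b hc hb
      rcases List.chain_cons.mp hc with ⟨hac, hct⟩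
      rcases List.mem_cons.mp hb with rfl | hb
      · exact Relation.TransGen.single hac
      · exact Relation.TransGen.head hac (ih c b hct hb)
  -- chains are nodup by acyclicity
  have chain_nodup : ∀ (l : List V) (a : V), List.Chain E a l → (a :: l).Nodup := by
    intro l
    induction l with
    | nil => simp
    | cons c t ih =>
      intro a hc
      rcases List.chain_cons.mp hc with ⟨hac, hct⟩
      refine List.nodup_cons.mpr ⟨?_, ih c hct⟩
      intro hmem
      rcases List.mem_cons.mp hmem with rfl | hmem
      · exact hacyclic a (Relation.TransGen.single hac)
      · exact hacyclic a (Relation.TransGen.head hac (chain_trans t c a hct hmem))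
  -- every element of a chain reaches (or is) the last element
  have chain_last : ∀ (l : List V) (a x : V), List.Chain E a l → x ∈ a :: l →
      x = (a :: l).getLast (List.cons_ne_nil a l) ∨
        Relation.TransGen E x ((a :: l).getLast (List.cons_ne_nil a l)) := by
    intro l
    induction l with
    | nil => intro a x _ hx; left; simpa using hx
    | cons c t ih =>
      intro a x hc hx
      rcases List.chain_cons.mp hc with ⟨hac, hct⟩
      have hlast : (a :: c :: t).getLast (List.cons_ne_nil a (c :: t)) =
          (c :: t).getLast (List.cons_ne_nil c t) := by
        simp [List.getLast_cons]
      rcases List.mem_cons.mp hx with rfl | hx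
      · right
        rw [hlast]
        exact chain_trans (c :: t) x _ hc (List.getLast_mem (List.cons_ne_nil c t))
      · rw [hlast]; exact ih c x hct hx
  -- monotonicity
  have mono : ∀ k v, S k v ⊆ S (k + 1) v := by
    intro k
    induction k with
    | zero => intro v; rw [hSstep]; exact Set.subset_union_right
    | succ k ih =>
      intro v
      rw [hSstep, hSstep]
      exact Set.union_subset_union_left _ (Set.iUnion₂_mono fun j _ => ih j)
  have mono' : ∀ k k' v, k ≤ k' → S k v ⊆ S k' v := by
    intro k k' v h
    induction h with
    | refl => exact subset_rfl
    | step _ ih => exact fun x hx => mono _ _ (ih hx)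
  -- upper bound
  have up : ∀ k v, S k v ⊆ {w | leader w ∧ Relation.TransGen E w v} := by
    intro k
    induction k with
    | zero =>
      intro v w hw
      rw [hS0] at hw
      exact ⟨hw.1, Relation.TransGen.single hw.2⟩
    | succ k ih =>
      intro v w hw
      rw [hSstep] at hw
      rcases hw with hw | hw
      · simp only [Set.mem_iUnion] at hw
        obtain ⟨j, ⟨hj, hjv⟩, hwj⟩ := hw
        obtain ⟨hl, ht⟩ := ih j hwj
        exact ⟨hl, ht.tail hjv⟩
      · rw [hS0] at hw
        exact ⟨hw.1, Relation.TransGen.single hw.2⟩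
  -- membership along a chain
  have memS : ∀ (l : List V) (a v : V), leader a → List.Chain E a (l ++ [v]) →
      a ∈ S l.length v := by
    intro l
    induction l using List.reverseRecOn with
    | nil =>
      intro a v ha hc
      show a ∈ S 0 v
      rw [hS0]
      exact ⟨ha, List.isChain_pair.mp hc⟩
    | append_singleton t j ih =>
      intro a v ha hc
      rw [List.append_assoc] at hc
      rcases (List.isChain_cons_split (R := E) (a := a) (l₁ := t) (c := j) (l₂ := [v])).mp hc with ⟨h1, h2⟩
      have hjv : E j v := List.isChain_pair.mp h2
      have haj : Relation.TransGen E a j :=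
        chain_trans (t ++ [j]) a j h1 (by simp)
      have hj : ¬ leader j := by
        intro hl
        obtain ⟨c, _, hcj⟩ := Relation.TransGen.tail'_iff.mp haj
        exact hnoIn j c hl hcj
      have hmem := ih a j ha h1
      simp only [List.length_append, List.length_singleton]
      rw [hSstep]
      left
      have : a ∈ ⋃ j' ∈ {j' | ¬ leader j' ∧ E j' v}, S t.length j' :=
        Set.mem_biUnion (show j ∈ {j' | ¬ leader j' ∧ E j' v} from ⟨hj, hjv⟩) hmem
      simpa using this
  intro k hk
  apply Set.Subset.antisymm
  · exact up k i
  · rintro w ⟨hwl, hwt⟩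
    obtain ⟨l, hchain, hlast⟩ :=
      List.exists_isChain_cons_of_relationReflTransGen hwt.to_reflTransGen
    have hne : l ≠ [] := by
      rintro rfl
      simp at hlast
      exact hi (hlast ▸ hwl)
    have hlast' : l.getLast hne = i := by
      rwa [List.getLast_cons hne] at hlast
    have hl2 : l.dropLast ++ [i] = l := by
      rw [← hlast']; exact List.dropLast_append_getLast hne
    have hwmem : w ∈ S l.dropLast.length i := by
      apply memS l.dropLast w i hwl
      rw [hl2]; exact hchain
    have hbound : (w :: l).length ≤ K + 1 := by
      apply hK
      · exact hchain
      · exact chain_nodup l w hchain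
      · intro v hv
        rcases chain_last l w v hchain hv with h | h
        · left; rwa [hlast] at h
        · right; rwa [hlast] at h
    have hlen : l.dropLast.length ≤ K := by
      have h1 : l.length ≤ K := by simpa using hbound
      have h2 : l.dropLast.length = l.length - 1 := List.length_dropLast
      omega
    exact mono' _ _ _ (le_trans hlen hk) hwmem
end

section
/- Let G be a finite directed acyclic graph in which every follower is reachable from at least one leader. For each follower i, let L̄_{1ℓ}^i and L̄_{2ℓ}^i be the Laplacian sub-blocks of the local influence subgraph Ḡ_i (followers-to-followers and followers-to-leaders respectively). Then the row vector Φ_{Pℓ}^i = -Υ_i (L̄_{1ℓ}^i)^{-1} L̄_{2ℓ}^i (where Υ_i is the indicator row vector selecting the row of node i) equals the row of -L1^{-1}L2 corresponding to follower i in the global Laplacian partition, restricted to the influential leaders of i. -/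
open Matrix Relation

private lemma aux_grounded_inj {F : Type*} [Fintype F] [DecidableEq F]
    (b : F → F → ℝ) (r : F → ℝ)
    (hb : ∀ j k, 0 ≤ b j k) (hr : ∀ j, 0 ≤ r j)
    (hreach : ∀ j, ∃ g, 0 < r g ∧
      (g = j ∨ TransGen (fun u v : F => 0 < b v u) g j))
    (M : Matrix F F ℝ)
    (hM : ∀ j k, M j k = (if j = k then r j + ∑ k', b j k' else 0) - b j k) :
    Function.Injective M.mulVec := by
  have hker : ∀ z, M.mulVec z = 0 → z = 0 := by
    intro z hz
    by_contra hz0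
    obtain ⟨jw, hjw⟩ := Function.ne_iff.mp hz0
    have : Nonempty F := ⟨jw⟩
    obtain ⟨j0, hj0⟩ := Finite.exists_max fun j => |z j|
    set c := |z j0| with hc
    have hcpos : 0 < c := lt_of_lt_of_le (abs_pos.mpr hjw) (hj0 jw)
    have hrow : ∀ j, (r j + ∑ k', b j k') * z j = ∑ k', b j k' * z k' := by
      intro j
      have h2 : ∑ k', M j k' * z k' = 0 := congrFun hz j
      rw [show (∑ k', M j k' * z k')
          = (∑ k', (if j = k' then (r j + ∑ k'', b j k'') * z k' else 0))
            - ∑ k', b j k' * z k' from ?_] at h2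
      · rw [Finset.sum_ite_eq Finset.univ j
          (fun k' => (r j + ∑ k'', b j k'') * z k'), if_pos (Finset.mem_univ j)] at h2
        linarith
      · rw [← Finset.sum_sub_distrib]
        refine Finset.sum_congr rfl fun k' _ => ?_
        rw [hM]
        by_cases h : j = k' <;> simp [h, sub_mul]
    have claim : ∀ j, |z j| = c → r j = 0 ∧ ∀ u, 0 < b j u → |z u| = c := by
      intro j hj
      have hA : (r j + ∑ k', b j k') * c ≤ ∑ k', b j k' * |z k'| := by
        have h0 : 0 ≤ r j + ∑ k', b j k' :=
          add_nonneg (hr j) (Finset.sum_nonneg fun k' _ => hb j k')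
        calc (r j + ∑ k', b j k') * c = |(r j + ∑ k', b j k') * z j| := by
              rw [abs_mul, ← hj, abs_of_nonneg h0]
          _ = |∑ k', b j k' * z k'| := by rw [hrow j]
          _ ≤ ∑ k', |b j k' * z k'| := Finset.abs_sum_le_sum_abs _ _
          _ = ∑ k', b j k' * |z k'| := by
              refine Finset.sum_congr rfl fun k' _ => ?_
              rw [abs_mul, abs_of_nonneg (hb j k')]
      have hB : ∑ k', b j k' * |z k'| ≤ (∑ k', b j k') * c := by
        rw [Finset.sum_mul]
        exact Finset.sum_le_sum fun k' _ =>
          mul_le_mul_of_nonneg_left (hj0 k') (hb j k')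
      have hrj : r j = 0 := by
        have h1 : r j * c ≤ 0 := by nlinarith
        have := hr j
        nlinarith
      refine ⟨hrj, fun u hu => ?_⟩
      have hsum0 : ∑ k', b j k' * (c - |z k'|) = 0 := by
        have hle : ∑ k', b j k' * (c - |z k'|) ≤ 0 := by
          have : ∑ k', b j k' * (c - |z k'|)
              = (∑ k', b j k') * c - ∑ k', b j k' * |z k'| := by
            rw [Finset.sum_mul, ← Finset.sum_sub_distrib]
            exact Finset.sum_congr rfl fun k' _ => by ring
          rw [this]
          have := hA
          rw [hrj, zero_add] at this
          linarith
        have hge : 0 ≤ ∑ k', b j k' * (c - |z k'|) :=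
          Finset.sum_nonneg fun k' _ =>
            mul_nonneg (hb j k') (sub_nonneg.mpr (hj0 k'))
        linarith
      have := (Finset.sum_eq_zero_iff_of_nonneg
        (fun k' _ => mul_nonneg (hb j k') (sub_nonneg.mpr (hj0 k')))).mp hsum0
        u (Finset.mem_univ u)
      rcases mul_eq_zero.mp this with h | h
      · exact absurd h (ne_of_gt hu)
      · linarith [sub_eq_zero.mp h]
    obtain ⟨g, hg, hgj⟩ := hreach j0
    have hgS : |z g| = c := by
      rcases hgj with rfl | hpath
      · rfl
      · refine TransGen.head_induction_on hpath
          (fun {v} h => (claim j0 rfl).2 v h)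
          (fun {v w} h _ ih => (claim w ih).2 v h)
    exact absurd (claim g hgS).1 (ne_of_gt hg)
  intro x y hxy
  have : x - y = 0 := hker (x - y) (by rw [Matrix.mulVec_sub, hxy, sub_self])
  exact sub_eq_zero.mp this

private lemma aux_reach {n m : ℕ} (a : Matrix (Fin (n+m)) (Fin (n+m)) ℝ)
    (k : Fin m) (j : Fin n)
    (hpath : TransGen (fun u v : Fin (n+m) => 0 < a v u)
      (Fin.natAdd n k) (Fin.castAdd m j)) :
    ∃ g : Fin n, (∃ k' : Fin m, 0 < a (Fin.castAdd m g) (Fin.natAdd n k')) ∧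
      (g = j ∨ TransGen (fun u v : Fin n =>
        0 < a (Fin.castAdd m v) (Fin.castAdd m u)) g j) := by
  have hsplit : ∀ v : Fin (n+m),
      (∃ u : Fin n, v = Fin.castAdd m u) ∨ (∃ k' : Fin m, v = Fin.natAdd n k') :=
    fun v => Fin.addCases (fun u => Or.inl ⟨u, rfl⟩) (fun k' => Or.inr ⟨k', rfl⟩) v
  have main : ∀ v : Fin (n+m),
      TransGen (fun u v : Fin (n+m) => 0 < a v u) v (Fin.castAdd m j) →
      ((∃ g : Fin n, (∃ k' : Fin m, 0 < a (Fin.castAdd m g) (Fin.natAdd n k')) ∧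
        (g = j ∨ TransGen (fun u v : Fin n =>
          0 < a (Fin.castAdd m v) (Fin.castAdd m u)) g j)) ∨
       (∃ u : Fin n, v = Fin.castAdd m u ∧ (u = j ∨ TransGen (fun u v : Fin n =>
          0 < a (Fin.castAdd m v) (Fin.castAdd m u)) u j))) := by
    intro v hv
    induction hv using TransGen.head_induction_on with
    | single h =>
      rename_i v' -- the starting node
      rcases hsplit v' with ⟨u, rfl⟩ | ⟨k', rfl⟩
      · exact Or.inr ⟨u, rfl, Or.inr (TransGen.single h)⟩
      · exact Or.inl ⟨j, ⟨k', h⟩, Or.inl rfl⟩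
    | head h hTG ihP =>
      rename_i v' c'
      rcases ihP with hconc | ⟨u, rfl, hu⟩
      · exact Or.inl hconc
      · rcases hsplit v' with ⟨u', rfl⟩ | ⟨k', rfl⟩
        · refine Or.inr ⟨u', rfl, Or.inr ?_⟩
          rcases hu with rfl | hp
          · exact TransGen.single h
          · exact hp.head h
        · exact Or.inl ⟨u, ⟨k', h⟩, hu⟩
  rcases main _ hpath with hconc | ⟨u, hequ, _⟩
  · exact hconc
  · exfalso
    have hval := congrArg Fin.val hequ
    simp only [Fin.coe_natAdd, Fin.coe_castAdd] at hval
    have := u.isLt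
    omega


/-- The locally computed NLI row vector `Φ_{Pℓ}^i = -Υ_i (L̄_{1ℓ}^i)⁻¹ L̄_{2ℓ}^i`,
built from the Laplacian sub-blocks of the local influence subgraph `Ḡ_i`, coincides with
the row of `-L1⁻¹ L2` of the global Laplacian partition corresponding to follower `i`,
restricted to the influential leaders of `i`; the global entries at non-influential
leaders are zero. -/
theorem stmt4 (n m : ℕ) (a : Matrix (Fin (n+m)) (Fin (n+m)) ℝ)
    (hnn : ∀ i j, 0 ≤ a i j) (hhollow : ∀ i, a i i = 0)
    (hleader : ∀ (k : Fin m) (j : Fin (n+m)), a (Fin.natAdd n k) j = 0)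
    (hacyclic : ∀ v, ¬ Relation.TransGen (fun u v : Fin (n+m) => 0 < a v u) v v)
    (hreach : ∀ i : Fin n, ∃ k : Fin m,
      Relation.TransGen (fun u v : Fin (n+m) => 0 < a v u)
        (Fin.natAdd n k) (Fin.castAdd m i))
    (L : Matrix (Fin (n+m)) (Fin (n+m)) ℝ)
    (hL : ∀ i j, L i j = (if i = j then ∑ k, a i k else 0) - a i j)
    (L1 : Matrix (Fin n) (Fin n) ℝ)
    (hL1 : ∀ i j, L1 i j = L (Fin.castAdd m i) (Fin.castAdd m j))
    (L2 : Matrix (Fin n) (Fin m) ℝ)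
    (hL2 : ∀ i k, L2 i k = L (Fin.castAdd m i) (Fin.natAdd n k))
    (i : Fin n)
    (pF : Fin n → Prop) [DecidablePred pF]
    (hpF : ∀ j, pF j ↔ (j = i ∨ Relation.TransGen (fun u v : Fin (n+m) => 0 < a v u)
      (Fin.castAdd m j) (Fin.castAdd m i)))
    (pL : Fin m → Prop) [DecidablePred pL]
    (hpL : ∀ k, pL k ↔ Relation.TransGen (fun u v : Fin (n+m) => 0 < a v u)
      (Fin.natAdd n k) (Fin.castAdd m i))
    -- local Laplacian block among influential followers (local in-degree minus adjacency)
    (Lb1 : Matrix {j // pF j} {j // pF j} ℝ)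
    (hLb1 : ∀ j k, Lb1 j k =
      (if j = k then
        (∑ k' : {x // pF x}, a (Fin.castAdd m j.1) (Fin.castAdd m k'.1)) +
        (∑ k' : {x // pL x}, a (Fin.castAdd m j.1) (Fin.natAdd n k'.1))
       else 0) - a (Fin.castAdd m j.1) (Fin.castAdd m k.1))
    -- local Laplacian block from influential followers to influential leaders
    (Lb2 : Matrix {j // pF j} {k // pL k} ℝ)
    (hLb2 : ∀ j k, Lb2 j k = - a (Fin.castAdd m j.1) (Fin.natAdd n k.1))
    -- row selector of node i
    (Ups : Matrix Unit {j // pF j} ℝ)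
    (hUps : ∀ j, Ups () j = if j.1 = i then 1 else 0) :
    (∀ k : {k // pL k}, (-(Ups * Lb1⁻¹ * Lb2)) () k = (-(L1⁻¹ * L2)) i k.1) ∧
    (∀ k : Fin m, ¬ pL k → (-(L1⁻¹ * L2)) i k = 0) := by
  classical
  -- castAdd vs natAdd are distinct
  have hcn : ∀ (u : Fin n) (k : Fin m), Fin.castAdd m u ≠ Fin.natAdd n k := by
    intro u k h
    have hval := congrArg Fin.val h
    simp only [Fin.coe_castAdd, Fin.coe_natAdd] at hval
    have := u.isLt
    omega
  -- L1 in "grounded Laplacian" form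
  have hL1form : ∀ j k : Fin n, L1 j k =
      (if j = k then (∑ k' : Fin m, a (Fin.castAdd m j) (Fin.natAdd n k')) +
        (∑ k' : Fin n, a (Fin.castAdd m j) (Fin.castAdd m k')) else 0)
      - a (Fin.castAdd m j) (Fin.castAdd m k) := by
    intro j k
    rw [hL1, hL]
    by_cases h : j = k
    · subst h
      rw [if_pos rfl, if_pos rfl, Fin.sum_univ_add, add_comm]
    · rw [if_neg h, if_neg (by simpa using h)]
  have hbigreach : ∀ j : Fin n, ∃ g : Fin n,
      (∃ k' : Fin m, 0 < a (Fin.castAdd m g) (Fin.natAdd n k')) ∧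
      (g = j ∨ Relation.TransGen (fun u v : Fin n =>
        0 < a (Fin.castAdd m v) (Fin.castAdd m u)) g j) := by
    intro j
    obtain ⟨k, hk⟩ := hreach j
    exact aux_reach a k j hk
  have hL1inj : Function.Injective L1.mulVec := by
    refine aux_grounded_inj (fun j k => a (Fin.castAdd m j) (Fin.castAdd m k))
      (fun j => ∑ k' : Fin m, a (Fin.castAdd m j) (Fin.natAdd n k'))
      (fun j k => hnn _ _) (fun j => Finset.sum_nonneg fun _ _ => hnn _ _)
      ?_ L1 hL1form
    intro j
    obtain ⟨g, ⟨k', hk'⟩, hgj⟩ := hbigreach j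
    exact ⟨g, Finset.sum_pos' (fun x _ => hnn _ _) ⟨k', Finset.mem_univ _, hk'⟩, hgj⟩
  have hL1unit : IsUnit L1 := Matrix.mulVec_injective_iff_isUnit.mp hL1inj
  have hL1det : IsUnit L1.det := (Matrix.isUnit_iff_isUnit_det L1).mp hL1unit
  -- membership facts
  have hpFi : pF i := (hpF i).mpr (Or.inl rfl)
  have hclosedF : ∀ j : Fin n, pF j → ∀ u : Fin n,
      0 < a (Fin.castAdd m j) (Fin.castAdd m u) → pF u := by
    intro j hj u hu
    rw [hpF]
    rcases (hpF j).mp hj with rfl | hp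
    · exact Or.inr (Relation.TransGen.single hu)
    · exact Or.inr (Relation.TransGen.head hu hp)
  have hclosedL : ∀ j : Fin n, pF j → ∀ k : Fin m,
      0 < a (Fin.castAdd m j) (Fin.natAdd n k) → pL k := by
    intro j hj k hk
    rw [hpL]
    rcases (hpF j).mp hj with rfl | hp
    · exact Relation.TransGen.single hk
    · exact Relation.TransGen.head hk hp
  have hzF : ∀ j : Fin n, pF j → ∀ u : Fin n, ¬ pF u →
      a (Fin.castAdd m j) (Fin.castAdd m u) = 0 := by
    intro j hj u hu
    exact le_antisymm (not_lt.mp fun h => hu (hclosedF j hj u h)) (hnn _ _)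
  have hzL : ∀ j : Fin n, pF j → ∀ k : Fin m, ¬ pL k →
      a (Fin.castAdd m j) (Fin.natAdd n k) = 0 := by
    intro j hj k hk
    exact le_antisymm (not_lt.mp fun h => hk (hclosedL j hj k h)) (hnn _ _)
  -- sums over subtypes equal full sums for rows in pF
  have hsumF : ∀ j : Fin n, pF j →
      (∑ k' : {x // pF x}, a (Fin.castAdd m j) (Fin.castAdd m k'.1))
        = ∑ k' : Fin n, a (Fin.castAdd m j) (Fin.castAdd m k') := by
    intro j hj
    rw [← Finset.sum_subtype (Finset.univ.filter pF) (fun x => by simp)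
      (fun u => a (Fin.castAdd m j) (Fin.castAdd m u)),
      ← Finset.sum_filter_add_sum_filter_not Finset.univ pF
      (fun u => a (Fin.castAdd m j) (Fin.castAdd m u))]
    rw [Finset.sum_eq_zero (fun u hu => hzF j hj u (Finset.mem_filter.mp hu).2), add_zero]
  have hsumL : ∀ j : Fin n, pF j →
      (∑ k' : {x // pL x}, a (Fin.castAdd m j) (Fin.natAdd n k'.1))
        = ∑ k' : Fin m, a (Fin.castAdd m j) (Fin.natAdd n k') := by
    intro j hj
    rw [← Finset.sum_subtype (Finset.univ.filter pL) (fun x => by simp)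
      (fun u => a (Fin.castAdd m j) (Fin.natAdd n u)),
      ← Finset.sum_filter_add_sum_filter_not Finset.univ pL
      (fun u => a (Fin.castAdd m j) (Fin.natAdd n u))]
    rw [Finset.sum_eq_zero (fun u hu => hzL j hj u (Finset.mem_filter.mp hu).2), add_zero]
  -- Lb1 is the principal submatrix of L1
  have hLb1L1 : ∀ j k : {x // pF x}, Lb1 j k = L1 j.1 k.1 := by
    intro j k
    rw [hLb1, hL1form]
    by_cases h : j = k
    · subst h
      rw [if_pos rfl, if_pos rfl, hsumF j.1 j.2, hsumL j.1 j.2, add_comm]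
    · rw [if_neg h, if_neg (fun hh => h (Subtype.ext hh))]
  -- Lb1 in grounded form & invertible
  have hLb1form : ∀ j k : {x // pF x}, Lb1 j k =
      (if j = k then (∑ k' : {x // pL x}, a (Fin.castAdd m j.1) (Fin.natAdd n k'.1)) +
        (∑ k' : {x // pF x}, a (Fin.castAdd m j.1) (Fin.castAdd m k'.1)) else 0)
      - a (Fin.castAdd m j.1) (Fin.castAdd m k.1) := by
    intro j k
    rw [hLb1]
    by_cases h : j = k
    · rw [if_pos h, if_pos h, add_comm]
    · rw [if_neg h, if_neg h]
  have hpathF : ∀ u v : Fin n,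
      Relation.TransGen (fun u v : Fin n =>
        0 < a (Fin.castAdd m v) (Fin.castAdd m u)) u v → pF v → pF u := by
    intro u v hp hv
    rw [hpF]
    have hbig : Relation.TransGen (fun u v : Fin (n+m) => 0 < a v u)
        (Fin.castAdd m u) (Fin.castAdd m v) :=
      Relation.TransGen.lift (Fin.castAdd m) (fun _ _ h => h) _ _ hp
    rcases (hpF v).mp hv with rfl | hvi
    · exact Or.inr hbig
    · exact Or.inr (hbig.trans hvi)
  have hliftsub : ∀ (u v : Fin n) (hv : pF v),
      Relation.TransGen (fun u v : Fin n =>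
        0 < a (Fin.castAdd m v) (Fin.castAdd m u)) u v →
      ∃ hu : pF u, Relation.TransGen (fun u v : {x // pF x} =>
        0 < a (Fin.castAdd m v.1) (Fin.castAdd m u.1)) ⟨u, hu⟩ ⟨v, hv⟩ := by
    intro u v hv hp
    induction hp using Relation.TransGen.head_induction_on with
    | single h => exact ⟨hclosedF v hv _ h, Relation.TransGen.single h⟩
    | head h' hTG ih =>
      obtain ⟨hc, hpc⟩ := ih
      exact ⟨hclosedF _ hc _ h', hpc.head h'⟩
  have hsubreach : ∀ j : {x // pF x}, ∃ g : {x // pF x},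
      (0 < ∑ k' : {x // pL x}, a (Fin.castAdd m g.1) (Fin.natAdd n k'.1)) ∧
      (g = j ∨ Relation.TransGen (fun u v : {x // pF x} =>
        0 < a (Fin.castAdd m v.1) (Fin.castAdd m u.1)) g j) := by
    intro j
    obtain ⟨g, ⟨k', hk'⟩, hgj⟩ := hbigreach j.1
    have hgF : pF g := by
      rcases hgj with rfl | hp
      · exact j.2
      · exact hpathF g j.1 hp j.2
    have hgrd : 0 < ∑ k' : {x // pL x}, a (Fin.castAdd m g) (Fin.natAdd n k'.1) :=
      Finset.sum_pos' (fun x _ => hnn _ _)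
        ⟨⟨k', hclosedL g hgF k' hk'⟩, Finset.mem_univ _, hk'⟩
    refine ⟨⟨g, hgF⟩, hgrd, ?_⟩
    rcases hgj with rfl | hp
    · exact Or.inl (Subtype.ext rfl)
    · obtain ⟨hu, hsp⟩ := hliftsub g j.1 j.2 hp
      exact Or.inr hsp
  have hLb1inj : Function.Injective Lb1.mulVec := by
    refine aux_grounded_inj
      (fun j k : {x // pF x} => a (Fin.castAdd m j.1) (Fin.castAdd m k.1))
      (fun j : {x // pF x} => ∑ k' : {x // pL x}, a (Fin.castAdd m j.1) (Fin.natAdd n k'.1))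
      (fun j k => hnn _ _) (fun j => Finset.sum_nonneg fun _ _ => hnn _ _)
      ?_ Lb1 hLb1form
    intro j
    obtain ⟨g, hg, hgj⟩ := hsubreach j
    exact ⟨g, hg, hgj⟩
  have hLb1unit : IsUnit Lb1 := Matrix.mulVec_injective_iff_isUnit.mp hLb1inj
  have hLb1det : IsUnit Lb1.det := (Matrix.isUnit_iff_isUnit_det Lb1).mp hLb1unit
  have hLb1invmul : Lb1⁻¹ * Lb1 = 1 := Matrix.nonsing_inv_mul _ hLb1det
  have hL1mulinv : L1 * L1⁻¹ = 1 := Matrix.mul_nonsing_inv _ hL1det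
  -- key identity
  have hLX : L1 * (L1⁻¹ * L2) = L2 := by
    rw [← Matrix.mul_assoc, hL1mulinv, Matrix.one_mul]
  have hkey : ∀ (j : {x // pF x}) (k : Fin m),
      ∑ j' : {x // pF x}, Lb1 j j' * (L1⁻¹ * L2) j'.1 k = L2 j.1 k := by
    intro j k
    have h1 : ∑ j' : {x // pF x}, Lb1 j j' * (L1⁻¹ * L2) j'.1 k
        = ∑ j' ∈ Finset.univ.filter pF, L1 j.1 j' * (L1⁻¹ * L2) j' k := by
      rw [Finset.sum_subtype (p := pF) (Finset.univ.filter pF) (fun x => by simp)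
        (fun u => L1 j.1 u * (L1⁻¹ * L2) u k)]
      exact Finset.sum_congr rfl fun j' _ => by rw [hLb1L1]
    have h2 : ∑ j' ∈ Finset.univ.filter (fun x => ¬ pF x),
        L1 j.1 j' * (L1⁻¹ * L2) j' k = 0 := by
      refine Finset.sum_eq_zero fun j' hj' => ?_
      have hnotpF : ¬ pF j' := (Finset.mem_filter.mp hj').2
      have hne : j.1 ≠ j' := fun h => hnotpF (h ▸ j.2)
      have : L1 j.1 j' = 0 := by
        rw [hL1form, if_neg hne, hzF j.1 j.2 j' hnotpF, zero_sub, neg_zero]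
      rw [this, zero_mul]
    calc ∑ j' : {x // pF x}, Lb1 j j' * (L1⁻¹ * L2) j'.1 k
        = ∑ j' ∈ Finset.univ.filter pF, L1 j.1 j' * (L1⁻¹ * L2) j' k := h1
      _ = (∑ j' ∈ Finset.univ.filter pF, L1 j.1 j' * (L1⁻¹ * L2) j' k)
          + ∑ j' ∈ Finset.univ.filter (fun x => ¬ pF x),
            L1 j.1 j' * (L1⁻¹ * L2) j' k := by rw [h2, add_zero]
      _ = ∑ j' : Fin n, L1 j.1 j' * (L1⁻¹ * L2) j' k :=
          Finset.sum_filter_add_sum_filter_not Finset.univ pF _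
      _ = (L1 * (L1⁻¹ * L2)) j.1 k := (Matrix.mul_apply).symm
      _ = L2 j.1 k := by rw [hLX]
  -- L2 values
  have hL2val : ∀ (j : Fin n) (k : Fin m),
      L2 j k = - a (Fin.castAdd m j) (Fin.natAdd n k) := by
    intro j k
    rw [hL2, hL, if_neg (hcn j k), zero_sub]
  constructor
  · intro k
    have hXs : Lb1⁻¹ * Lb2 = Matrix.of
        (fun (j : {x // pF x}) (k : {x // pL x}) => (L1⁻¹ * L2) j.1 k.1) := by
      have h : Lb1 * Matrix.of
          (fun (j : {x // pF x}) (k : {x // pL x}) => (L1⁻¹ * L2) j.1 k.1) = Lb2 := by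
        ext j k'
        rw [Matrix.mul_apply]
        simp only [Matrix.of_apply]
        rw [hkey j k'.1, hLb2, hL2val]
      rw [← h, ← Matrix.mul_assoc, hLb1invmul, Matrix.one_mul]
    rw [Matrix.neg_apply, Matrix.neg_apply]
    congr 1
    rw [Matrix.mul_assoc, hXs, Matrix.mul_apply]
    have hterm : ∀ j : {x // pF x},
        Ups () j * (L1⁻¹ * L2) j.1 k.1
          = if j = ⟨i, hpFi⟩ then (L1⁻¹ * L2) j.1 k.1 else 0 := by
      intro j
      rw [hUps]
      by_cases h : j = (⟨i, hpFi⟩ : {x // pF x})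
      · subst h; simp
      · rw [if_neg (fun hh => h (Subtype.ext hh)), if_neg h, zero_mul]
    rw [Finset.sum_congr rfl (fun j _ => by
      simpa only [Matrix.of_apply] using hterm j)]
    rw [Finset.sum_ite_eq' Finset.univ (⟨i, hpFi⟩ : {x // pF x})]
    simp
  · intro k hk
    have hy : Lb1.mulVec (fun j : {x // pF x} => (L1⁻¹ * L2) j.1 k) = 0 := by
      funext j
      show ∑ j' : {x // pF x}, Lb1 j j' * (L1⁻¹ * L2) j'.1 k = 0
      rw [hkey j k, hL2val, hzL j.1 j.2 k hk, neg_zero]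
    have hzero : (fun j : {x // pF x} => (L1⁻¹ * L2) j.1 k) = 0 :=
      hLb1inj (by rw [hy, Matrix.mulVec_zero])
    have := congrFun hzero ⟨i, hpFi⟩
    rw [Matrix.neg_apply]
    simpa using this
end

section
/- Let G be a directed acyclic graph with followers F and leaders R. Then for every follower i, the local NLI row vector Φ_{Pℓ}^i = -Υ_i (L̄_{1ℓ}^i)^{-1} L̄_{2ℓ}^i satisfies Φ_{Pℓ}^i · 1 = 1 (its entries sum to one) for all i ∈ F if and only if every follower has at least one leader with a directed path to it. Moreover, when this holds, all entries of Φ_{Pℓ}^i are nonnegative, so the reference output y_i^* lies in the convex hull of the influential leaders' outputs. -/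
open Matrix Finset

lemma chain_of_pow_ne_zero {α : Type*} [Fintype α] [DecidableEq α] (r : α → α → Prop)
    (M : Matrix α α ℝ) (h : ∀ j k, M j k ≠ 0 → r k j) :
    ∀ p j k, (M ^ p) j k ≠ 0 → ∃ f : ℕ → α, f 0 = k ∧ f p = j ∧ ∀ t < p, r (f t) (f (t+1)) := by
  intro p
  induction p with
  | zero =>
    intro j k h0
    have hjk : j = k := by
      by_contra hne
      exact h0 (by simp [Matrix.one_apply, hne])
    exact ⟨fun _ => k, rfl, by simp [hjk], by omega⟩
  | succ p ih =>
    intro j k hne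
    rw [pow_succ] at hne
    obtain ⟨x, hx⟩ : ∃ x, (M ^ p) j x * M x k ≠ 0 := by
      by_contra hc
      push_neg at hc
      exact hne (by simp [Matrix.mul_apply, hc])
    have h1 : (M ^ p) j x ≠ 0 := fun h' => hx (by simp [h'])
    have h2 : M x k ≠ 0 := fun h' => hx (by simp [h'])
    obtain ⟨f, hf0, hfp, hchain⟩ := ih j x h1
    refine ⟨fun t => if t = 0 then k else f (t - 1), by simp, by simp [hfp], ?_⟩
    intro t ht
    rcases t with _ | t
    · simpa [hf0] using h x k h2
    · simpa using hchain t (by omega)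

lemma transGen_of_chain {α : Type*} (r : α → α → Prop) (f : ℕ → α) (p : ℕ)
    (hchain : ∀ t < p, r (f t) (f (t+1))) :
    ∀ s t, s < t → t ≤ p → Relation.TransGen r (f s) (f t) := by
  intro s t hst htp
  induction t with
  | zero => omega
  | succ t iht =>
    rcases Nat.lt_or_ge s t with h' | h'
    · exact (iht h' (by omega)).tail (hchain t (by omega))
    · have : s = t := by omega
      subst this
      exact Relation.TransGen.single (hchain s (by omega))

lemma pow_card_eq_zero' {α : Type*} [Fintype α] [DecidableEq α] (r : α → α → Prop)
    (hacyc : ∀ x, ¬ Relation.TransGen r x x)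
    (M : Matrix α α ℝ) (h : ∀ j k, M j k ≠ 0 → r k j) : M ^ Fintype.card α = 0 := by
  ext j k
  by_contra hne
  rw [Matrix.zero_apply] at hne
  obtain ⟨f, hf0, hfp, hchain⟩ := chain_of_pow_ne_zero r M h _ j k hne
  obtain ⟨s, t, hst, heq⟩ := Fintype.exists_ne_map_eq_of_card_lt
    (fun t : Fin (Fintype.card α + 1) => f t) (by simp)
  rcases Ne.lt_or_gt hst with hlt | hlt
  · exact hacyc (f s) (heq ▸ transGen_of_chain r f _ hchain s t hlt (by omega))
  · exact hacyc (f t) (heq ▸ transGen_of_chain r f _ hchain t s hlt (by omega))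

lemma pow_entries_nonneg {α : Type*} [Fintype α] [DecidableEq α]
    (M : Matrix α α ℝ) (h : ∀ j k, 0 ≤ M j k) (p : ℕ) : ∀ j k, 0 ≤ (M ^ p) j k := by
  induction p with
  | zero => intro j k; rw [pow_zero, Matrix.one_apply]; positivity
  | succ p ih =>
    intro j k
    rw [pow_succ, Matrix.mul_apply]
    exact Finset.sum_nonneg fun x _ => mul_nonneg (ih j x) (h x k)

lemma inv_lemma {α : Type*} [Fintype α] [DecidableEq α] (r : α → α → Prop)
    (hacyc : ∀ x, ¬ Relation.TransGen r x x)
    (d : α → ℝ) (hd : ∀ j, 0 < d j)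
    (A : Matrix α α ℝ) (hA : ∀ j k, 0 ≤ A j k) (hAr : ∀ j k, A j k ≠ 0 → r k j)
    {M : Matrix α α ℝ} (hM : M = Matrix.diagonal d - A) :
    (M⁻¹ * M = 1 ∧ M * M⁻¹ = 1) ∧ ∀ j k, 0 ≤ M⁻¹ j k := by
  set c := Fintype.card α
  set N : Matrix α α ℝ := (Matrix.diagonal fun j => (d j)⁻¹) * A with hN
  have hNentry : ∀ j k, N j k = (d j)⁻¹ * A j k := fun j k => by
    simp [hN, Matrix.diagonal_mul]
  have hNnn : ∀ j k, 0 ≤ N j k := fun j k => by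
    rw [hNentry]; exact mul_nonneg (inv_nonneg.2 (hd j).le) (hA j k)
  have hNc : N ^ c = 0 := by
    refine pow_card_eq_zero' r hacyc N fun j k hne => ?_
    refine hAr j k fun h' => hne ?_
    rw [hNentry, h', mul_zero]
  have hdd : (Matrix.diagonal d) * (Matrix.diagonal fun j => (d j)⁻¹) = (1 : Matrix α α ℝ) := by
    rw [Matrix.diagonal_mul_diagonal]
    convert Matrix.diagonal_one
    exact mul_inv_cancel₀ (hd _).ne'
  have hMfact : M = Matrix.diagonal d * (1 - N) := by
    rw [hM, Matrix.mul_sub, mul_one, hN, ← Matrix.mul_assoc, hdd, Matrix.one_mul]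
  set S : Matrix α α ℝ := ∑ t ∈ Finset.range c, N ^ t with hS
  have hgeom : (1 - N) * S = 1 := by
    have := mul_geom_sum (x := N) (n := c)
    rw [hNc] at this
    have h2 : (1 - N) * S = -((N - 1) * S) := by rw [← neg_mul, neg_sub]
    rw [h2, hS, this]
    simp
  set B : Matrix α α ℝ := S * Matrix.diagonal fun j => (d j)⁻¹ with hB
  have hMB : M * B = 1 := by
    rw [hMfact, hB, Matrix.mul_assoc, ← Matrix.mul_assoc (1 - N), hgeom, Matrix.one_mul, hdd]
  have hinv : M⁻¹ = B := Matrix.inv_eq_right_inv hMB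
  have hBM : B * M = 1 := mul_eq_one_comm.1 hMB
  refine ⟨⟨by rw [hinv]; exact hBM, by rw [hinv]; exact hMB⟩, fun j k => ?_⟩
  rw [hinv, hB, Matrix.mul_diagonal]
  refine mul_nonneg ?_ (inv_nonneg.2 (hd k).le)
  rw [hS, Matrix.sum_apply]
  exact Finset.sum_nonneg fun t _ => pow_entries_nonneg N hNnn t j k


/-- In a DAG, the local NLI row vectors `Φ_{Pℓ}^i = -Υ_i (L̄_{1ℓ}^i)⁻¹ L̄_{2ℓ}^i`
have entries summing to one for every follower `i` if and only if every follower is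
reachable from at least one leader; and when this holds, all entries are nonnegative. -/
theorem stmt5 (n m : ℕ) (a : Matrix (Fin (n+m)) (Fin (n+m)) ℝ)
    (hnn : ∀ i j, 0 ≤ a i j) (hhollow : ∀ i, a i i = 0)
    (hleader : ∀ (k : Fin m) (j : Fin (n+m)), a (Fin.natAdd n k) j = 0)
    (hacyclic : ∀ v, ¬ Relation.TransGen (fun u v : Fin (n+m) => 0 < a v u) v v)
    (pF : Fin n → Fin n → Prop) [∀ i, DecidablePred (pF i)]
    (hpF : ∀ i j, pF i j ↔ (j = i ∨ Relation.TransGen (fun u v : Fin (n+m) => 0 < a v u)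
      (Fin.castAdd m j) (Fin.castAdd m i)))
    (pL : Fin n → Fin m → Prop) [∀ i, DecidablePred (pL i)]
    (hpL : ∀ i k, pL i k ↔ Relation.TransGen (fun u v : Fin (n+m) => 0 < a v u)
      (Fin.natAdd n k) (Fin.castAdd m i))
    (Lb1 : (i : Fin n) → Matrix {j // pF i j} {j // pF i j} ℝ)
    (hLb1 : ∀ i j k, Lb1 i j k =
      (if j = k then
        (∑ k' : {x // pF i x}, a (Fin.castAdd m j.1) (Fin.castAdd m k'.1)) +
        (∑ k' : {x // pL i x}, a (Fin.castAdd m j.1) (Fin.natAdd n k'.1))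
       else 0) - a (Fin.castAdd m j.1) (Fin.castAdd m k.1))
    (Lb2 : (i : Fin n) → Matrix {j // pF i j} {k // pL i k} ℝ)
    (hLb2 : ∀ i j k, Lb2 i j k = - a (Fin.castAdd m j.1) (Fin.natAdd n k.1))
    (Ups : (i : Fin n) → Matrix Unit {j // pF i j} ℝ)
    (hUps : ∀ i j, Ups i () j = if j.1 = i then 1 else 0) :
    ((∀ i : Fin n, ∑ k : {k // pL i k}, (-(Ups i * (Lb1 i)⁻¹ * Lb2 i)) () k = 1) ↔
      (∀ i : Fin n, ∃ k : Fin m,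
        Relation.TransGen (fun u v : Fin (n+m) => 0 < a v u)
          (Fin.natAdd n k) (Fin.castAdd m i))) ∧
    ((∀ i : Fin n, ∃ k : Fin m,
        Relation.TransGen (fun u v : Fin (n+m) => 0 < a v u)
          (Fin.natAdd n k) (Fin.castAdd m i)) →
      ∀ (i : Fin n) (k : {k // pL i k}), 0 ≤ (-(Ups i * (Lb1 i)⁻¹ * Lb2 i)) () k) := by
  set e : Fin (n+m) → Fin (n+m) → Prop := fun u v => 0 < a v u with he
  have key : (∀ i : Fin n, ∃ k : Fin m, Relation.TransGen e (Fin.natAdd n k) (Fin.castAdd m i)) →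
      ∀ i : Fin n,
        (∑ k : {k // pL i k}, (-(Ups i * (Lb1 i)⁻¹ * Lb2 i)) () k = 1) ∧
        (∀ k : {k // pL i k}, 0 ≤ (-(Ups i * (Lb1 i)⁻¹ * Lb2 i)) () k) := by
    intro hreach i
    set r : {j // pF i j} → {j // pF i j} → Prop :=
      fun u v => 0 < a (Fin.castAdd m v.1) (Fin.castAdd m u.1) with hr
    have hacyc_r : ∀ x, ¬ Relation.TransGen r x x := by
      intro x hx
      exact hacyclic (Fin.castAdd m x.1)
        (Relation.TransGen.lift (fun u : {j // pF i j} => Fin.castAdd m u.1)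
          (fun u v huv => huv) _ _ hx)
    set d : {j // pF i j} → ℝ := fun j =>
      (∑ k' : {x // pF i x}, a (Fin.castAdd m j.1) (Fin.castAdd m k'.1)) +
      (∑ k' : {x // pL i x}, a (Fin.castAdd m j.1) (Fin.natAdd n k'.1)) with hdef
    have hcomp : ∀ (j : {j // pF i j}) (w : Fin (n+m)), e w (Fin.castAdd m j.1) →
        Relation.TransGen e w (Fin.castAdd m i) := by
      intro j w hw
      rcases (hpF i j.1).1 j.2 with h | h
      · exact h ▸ Relation.TransGen.single hw
      · exact Relation.TransGen.head hw h
    have hd : ∀ j, 0 < d j := by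
      intro j
      obtain ⟨k, hk⟩ := hreach j.1
      rw [Relation.TransGen.tail'_iff] at hk
      obtain ⟨u, _, hedge⟩ := hk
      by_cases hu : u.1 < n
      · set u' : Fin n := ⟨u.1, hu⟩ with hu'
        have hue : Fin.castAdd m u' = u := by apply Fin.ext; simp [hu']
        have hpFu : pF i u' := (hpF i u').2 (Or.inr (by rw [hue]; exact hcomp j u hedge))
        have hterm : (0:ℝ) < a (Fin.castAdd m j.1) (Fin.castAdd m u') := by
          rw [hue]; exact hedge
        refine add_pos_of_pos_of_nonneg (lt_of_lt_of_le hterm ?_)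
          (Finset.sum_nonneg fun _ _ => hnn _ _)
        exact Finset.single_le_sum (f := fun k' : {x // pF i x} =>
          a (Fin.castAdd m j.1) (Fin.castAdd m k'.1)) (fun _ _ => hnn _ _)
          (Finset.mem_univ (⟨u', hpFu⟩ : {x // pF i x}))
      · set k'' : Fin m := ⟨u.1 - n, by omega⟩ with hk''
        have hue : Fin.natAdd n k'' = u := by apply Fin.ext; simp [hk'']; omega
        have hpLu : pL i k'' := (hpL i k'').2 (by rw [hue]; exact hcomp j u hedge)
        have hterm : (0:ℝ) < a (Fin.castAdd m j.1) (Fin.natAdd n k'') := by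
          rw [hue]; exact hedge
        refine add_pos_of_nonneg_of_pos (Finset.sum_nonneg fun _ _ => hnn _ _)
          (lt_of_lt_of_le hterm ?_)
        exact Finset.single_le_sum (f := fun k' : {x // pL i x} =>
          a (Fin.castAdd m j.1) (Fin.natAdd n k'.1)) (fun _ _ => hnn _ _)
          (Finset.mem_univ (⟨k'', hpLu⟩ : {x // pL i x}))
    set A : Matrix {j // pF i j} {j // pF i j} ℝ :=
      fun j k => a (Fin.castAdd m j.1) (Fin.castAdd m k.1) with hAdef
    have hM : Lb1 i = Matrix.diagonal d - A := by
      ext j k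
      rw [hLb1, Matrix.sub_apply, Matrix.diagonal_apply]
    obtain ⟨⟨hinv1, _⟩, hnnInv⟩ := inv_lemma r hacyc_r d hd A (fun _ _ => hnn _ _)
      (fun j k hne => lt_of_le_of_ne (hnn _ _) (Ne.symm hne)) hM
    have hUMnn : ∀ j', 0 ≤ (Ups i * (Lb1 i)⁻¹) () j' := by
      intro j'
      rw [Matrix.mul_apply]
      refine Finset.sum_nonneg fun t _ => mul_nonneg ?_ (hnnInv t j')
      rw [hUps]
      positivity
    have hentry : ∀ k, (-(Ups i * (Lb1 i)⁻¹ * Lb2 i)) () k =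
        ∑ j', (Ups i * (Lb1 i)⁻¹) () j' * (- Lb2 i j' k) := by
      intro k
      rw [Matrix.neg_apply, Matrix.mul_apply, ← Finset.sum_neg_distrib]
      exact Finset.sum_congr rfl fun j' _ => by ring
    constructor
    · -- sum to one
      have hrow : ∀ j : {j // pF i j}, (∑ k : {k // pL i k}, - Lb2 i j k) =
          ∑ k, Lb1 i j k := by
        intro j
        have h1 : (∑ k : {k // pL i k}, - Lb2 i j k) =
            ∑ k' : {x // pL i x}, a (Fin.castAdd m j.1) (Fin.natAdd n k'.1) :=
          Finset.sum_congr rfl fun k _ => by rw [hLb2, neg_neg]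
        have h2 : ∑ k, Lb1 i j k =
            ∑ k' : {x // pL i x}, a (Fin.castAdd m j.1) (Fin.natAdd n k'.1) := by
          simp only [hLb1, Finset.sum_sub_distrib, Finset.sum_ite_eq, Finset.mem_univ,
            if_true]
          ring
        rw [h1, h2]
      calc ∑ k : {k // pL i k}, (-(Ups i * (Lb1 i)⁻¹ * Lb2 i)) () k
          = ∑ k : {k // pL i k}, ∑ j', (Ups i * (Lb1 i)⁻¹) () j' * (- Lb2 i j' k) := by
            exact Finset.sum_congr rfl fun k _ => hentry k
        _ = ∑ j', (Ups i * (Lb1 i)⁻¹) () j' * (∑ k : {k // pL i k}, - Lb2 i j' k) := by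
            rw [Finset.sum_comm]
            exact Finset.sum_congr rfl fun j' _ => by rw [Finset.mul_sum]
        _ = ∑ j', (Ups i * (Lb1 i)⁻¹) () j' * (∑ k, Lb1 i j' k) := by
            exact Finset.sum_congr rfl fun j' _ => by rw [hrow]
        _ = ∑ k, ∑ j', (Ups i * (Lb1 i)⁻¹) () j' * Lb1 i j' k := by
            rw [Finset.sum_comm]
            exact Finset.sum_congr rfl fun j' _ => by rw [Finset.mul_sum]
        _ = ∑ k, (Ups i * (Lb1 i)⁻¹ * Lb1 i) () k := by
            exact Finset.sum_congr rfl fun k _ => by rw [Matrix.mul_apply]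
        _ = ∑ k, Ups i () k := by
            rw [Matrix.mul_assoc, hinv1, Matrix.mul_one]
        _ = 1 := by
            have hii : pF i i := (hpF i i).2 (Or.inl rfl)
            have heq : ∀ k : {j // pF i j}, Ups i () k =
                if k = (⟨i, hii⟩ : {j // pF i j}) then 1 else 0 := by
              intro k
              rw [hUps]
              simp [Subtype.ext_iff]
            simp only [heq]
            rw [Finset.sum_ite_eq' Finset.univ]
            simp
    · intro k
      rw [hentry]
      refine Finset.sum_nonneg fun j' _ => mul_nonneg (hUMnn j') ?_
      rw [hLb2, neg_neg]
      exact hnn _ _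
  refine ⟨⟨?_, fun hreach i => (key hreach i).1⟩, fun hreach i k => (key hreach i).2 k⟩
  intro hsum i
  by_contra h
  haveI : IsEmpty {k // pL i k} := ⟨fun k => h ⟨k.1, (hpL i k.1).1 k.2⟩⟩
  have := hsum i
  rw [Finset.univ_eq_empty, Finset.sum_empty] at this
  exact one_ne_zero this.symm
end
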